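/- Let d ≥ 1, let x_1, …, x_N ∈ [0,1]^d, let ε > 0, and define f_ε : ℝ^d → ℝ by f_ε(x) = min{ε, min_{1 ≤ k ≤ N} ‖x − x_k‖}. Then: (i) f_ε is Lipschitz with constant 1; (ii) f_ε(x_j) = 0 for every j, so (1/N)∑_{k=1}^N f_ε(x_k) = 0; and (iii) ∫_{[0,1]^d} f_ε(x) dx ≥ ε · (1 − N · ω_d · ε^d), where ω_d is the Lebesgue measure of the unit ball in ℝ^d. Consequently the integration error satisfies |∫_{[0,1]^d} f_ε dx − (1/N)∑_k f_ε(x_k)| ≥ ε(1 − N ω_d ε^d). -/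

import Mathlib

open MeasureTheory Metric
open scoped ENNReal

noncomputable section

/-- The closed unit cube `[0,1]^d` in `ℝ^d`. -/
def unitCube (d : ℕ) : Set (EuclideanSpace ℝ (Fin d)) :=
  {x | ∀ i, x i ∈ Set.Icc (0 : ℝ) 1}

/-- `ω_d`, the Lebesgue volume of the closed unit ball in `ℝ^d`. -/
def unitBallVol (d : ℕ) : ℝ :=
  (volume (Metric.closedBall (0 : EuclideanSpace ℝ (Fin d)) 1)).toReal

lemma aux_iInf_eq_infDist {d N : ℕ} (hN : 0 < N) (x : Fin N → EuclideanSpace ℝ (Fin d))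
    (y : EuclideanSpace ℝ (Fin d)) :
    (⨅ k, ‖y - x k‖) = infDist y (Set.range x) := by
  have : Nonempty (Fin N) := Fin.pos_iff_nonempty.1 hN
  rw [infDist_eq_iInf]
  have h : Set.range (fun z : Set.range x => dist y (z : EuclideanSpace ℝ (Fin d)))
      = Set.range (fun k => ‖y - x k‖) := by
    ext r; constructor
    · rintro ⟨⟨_, k, rfl⟩, rfl⟩; exact ⟨k, by simp [dist_eq_norm]⟩
    · rintro ⟨k, rfl⟩; exact ⟨⟨x k, k, rfl⟩, by simp [dist_eq_norm]⟩
  rw [iInf, iInf, h]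

lemma aux_unitCube_measurable (d : ℕ) : MeasurableSet (unitCube d) := by
  have : unitCube d = ⋂ i, (fun y : EuclideanSpace ℝ (Fin d) => y i) ⁻¹' Set.Icc (0:ℝ) 1 := by
    ext z; simp [unitCube]
  rw [this]
  exact MeasurableSet.iInter fun i =>
    (measurableSet_Icc).preimage ((measurable_pi_apply i).comp (WithLp.measurable_ofLp 2 _))

lemma aux_unitCube_volume (d : ℕ) : volume (unitCube d) = 1 := by
  have h : unitCube d =
      (MeasurableEquiv.toLp 2 (Fin d → ℝ)).symm ⁻¹' (Set.univ.pi fun _ => Set.Icc (0:ℝ) 1) := by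
    ext z
    simp only [unitCube, Set.mem_setOf_eq, Set.mem_preimage, Set.mem_pi, Set.mem_univ,
      forall_true_left]
    rfl
  rw [h, (EuclideanSpace.volume_preserving_symm_measurableEquiv_toLp (Fin d)).measure_preimage
    (by measurability)]
  rw [volume_pi_pi]
  simp [Real.volume_Icc]

theorem stmt7 (d : ℕ) (hd : 1 ≤ d) (N : ℕ) (hN : 0 < N)
    (x : Fin N → EuclideanSpace ℝ (Fin d)) (hx : ∀ k, x k ∈ unitCube d)
    (ε : ℝ) (hε : 0 < ε)
    (fε : EuclideanSpace ℝ (Fin d) → ℝ)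
    (hfε : ∀ y, fε y = min ε (⨅ k, ‖y - x k‖)) :
    LipschitzWith 1 fε ∧
    ((∀ j, fε (x j) = 0) ∧ (1 / N : ℝ) * ∑ k, fε (x k) = 0) ∧
    ε * (1 - N * unitBallVol d * ε ^ d) ≤ ∫ y in unitCube d, fε y ∧
    ε * (1 - N * unitBallVol d * ε ^ d) ≤
      |(∫ y in unitCube d, fε y) - (1 / N : ℝ) * ∑ k, fε (x k)| := by
  have hne : Nonempty (Fin N) := Fin.pos_iff_nonempty.1 hN
  -- (i) Lipschitz
  have hlip : LipschitzWith 1 fε := by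
    have h1 : LipschitzWith 1 (fun y => infDist y (Set.range x)) := lipschitz_infDist_pt _
    have h2 : LipschitzWith 1 (fun y => min ε (infDist y (Set.range x))) :=
      by simpa using (LipschitzWith.const' ε (K := 1)).min h1
    have : fε = fun y => min ε (infDist y (Set.range x)) := by
      funext y; rw [hfε y, aux_iInf_eq_infDist hN]
    rw [this]; exact h2
  -- basic bounds
  have hnonneg : ∀ y, 0 ≤ fε y := by
    intro y
    rw [hfε y]
    exact le_min hε.le (Real.iInf_nonneg fun k => norm_nonneg _)
  have hle : ∀ y, fε y ≤ ε := fun y => by rw [hfε y]; exact min_le_left _ _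
  -- (ii)
  have hzero : ∀ j, fε (x j) = 0 := by
    intro j
    rw [hfε]
    have h1 : (⨅ k, ‖x j - x k‖) ≤ 0 := by
      have := ciInf_le (f := fun k => ‖x j - x k‖)
        ⟨0, fun r ⟨k, hk⟩ => hk ▸ norm_nonneg _⟩ j
      simpa using this
    have h2 : (0:ℝ) ≤ ⨅ k, ‖x j - x k‖ := Real.iInf_nonneg fun k => norm_nonneg _
    rw [le_antisymm h1 h2]
    exact min_eq_right hε.le
  have hsum : (1 / N : ℝ) * ∑ k, fε (x k) = 0 := by
    simp [Finset.sum_congr rfl (fun k _ => hzero k)]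
  -- (iii)
  set S := unitCube d with hS
  set B := ⋃ k, closedBall (x k) ε with hB
  have hSm : MeasurableSet S := aux_unitCube_measurable d
  have hSvol : volume S = 1 := aux_unitCube_volume d
  have hBm : MeasurableSet B := MeasurableSet.iUnion fun k => measurableSet_closedBall
  have hBle : volume B ≤ N * (ENNReal.ofReal (ε ^ d) * volume (closedBall (0:EuclideanSpace ℝ (Fin d)) 1)) := by
    calc volume B ≤ ∑ k, volume (closedBall (x k) ε) := measure_iUnion_fintype_le _ _
    _ = ∑ _k : Fin N, ENNReal.ofReal (ε ^ d) * volume (closedBall (0:EuclideanSpace ℝ (Fin d)) 1) := by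
        refine Finset.sum_congr rfl fun k _ => ?_
        rw [Measure.addHaar_closedBall' volume (x k) hε.le]
        congr 2
        simp [finrank_euclideanSpace_fin]
    _ = N * (ENNReal.ofReal (ε ^ d) * volume (closedBall (0:EuclideanSpace ℝ (Fin d)) 1)) := by
        simp [Finset.sum_const, mul_comm]
  have hBfin : volume B ≠ ∞ := by
    refine ne_top_of_le_ne_top ?_ hBle
    exact ENNReal.mul_ne_top (by simp) (ENNReal.mul_ne_top (by simp)
      (measure_closedBall_lt_top).ne
      )
  have hBtoReal : (volume B).toReal ≤ N * unitBallVol d * ε ^ d := by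
    have := ENNReal.toReal_mono (ENNReal.mul_ne_top (by simp) (ENNReal.mul_ne_top (by simp)
      measure_closedBall_lt_top.ne)) hBle
    rw [ENNReal.toReal_mul, ENNReal.toReal_mul, ENNReal.toReal_ofReal (by positivity)] at this
    calc (volume B).toReal ≤ (N:ℝ≥0∞).toReal * (ε ^ d * unitBallVol d) := this
    _ = N * unitBallVol d * ε ^ d := by simp [unitBallVol]; ring
  -- fε = ε off B
  have hfεB : ∀ y ∈ S \ B, fε y = ε := by
    rintro y ⟨-, hyB⟩
    rw [hfε]
    refine min_eq_left (le_ciInf fun k => ?_)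
    have : y ∉ closedBall (x k) ε := fun h => hyB (Set.mem_iUnion.2 ⟨k, h⟩)
    rw [mem_closedBall, not_le, dist_eq_norm] at this
    exact this.le
  -- integrability
  have hcont : Continuous fε := hlip.continuous
  have hfin : IsFiniteMeasure (volume.restrict S) := by
    constructor; rw [Measure.restrict_apply_univ, hSvol]; exact ENNReal.one_lt_top
  have hint : IntegrableOn fε S := by
    refine Integrable.mono' (integrable_const ε) hcont.aestronglyMeasurable ?_
    exact Filter.Eventually.of_forall fun y => by
      rw [Real.norm_eq_abs, abs_of_nonneg (hnonneg y)]; exact hle y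
  -- volume of S \ B
  have hSBvol : 1 - N * unitBallVol d * ε ^ d ≤ (volume (S \ B)).toReal := by
    have h1 : (1 : ℝ≥0∞) - volume B ≤ volume (S \ B) := by
      rw [← hSvol]; exact le_measure_diff
    have h2 : volume (S \ B) ≠ ∞ := by
      refine ne_top_of_le_ne_top ?_ (measure_mono Set.diff_subset)
      rw [hSvol]; exact ENNReal.one_ne_top
    calc 1 - N * unitBallVol d * ε ^ d
        ≤ 1 - (volume B).toReal := by linarith
      _ = (1:ℝ≥0∞).toReal - (volume B).toReal := by simp
      _ ≤ ((1:ℝ≥0∞) - volume B).toReal := ENNReal.le_toReal_sub hBfin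
      _ ≤ (volume (S \ B)).toReal := ENNReal.toReal_mono h2 h1
  have hkey : ε * (1 - N * unitBallVol d * ε ^ d) ≤ ∫ y in S, fε y := by
    have hsub : S \ B ⊆ S := Set.diff_subset
    have hstep1 : ∫ y in S \ B, fε y ≤ ∫ y in S, fε y := by
      refine setIntegral_mono_set hint ?_ (HasSubset.Subset.eventuallyLE hsub)
      exact Filter.Eventually.of_forall hnonneg
    have hstep2 : (∫ y in S \ B, fε y) = ε * (volume (S \ B)).toReal := by
      rw [setIntegral_congr_fun (hSm.diff hBm) hfεB, setIntegral_const, smul_eq_mul, mul_comm, measureReal_def]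
    have hstep3 : ε * (1 - N * unitBallVol d * ε ^ d) ≤ ε * (volume (S \ B)).toReal :=
      mul_le_mul_of_nonneg_left hSBvol hε.le
    linarith
  refine ⟨hlip, ⟨hzero, hsum⟩, hkey, ?_⟩
  rw [hsum, sub_zero, abs_of_nonneg (setIntegral_nonneg hSm fun y _ => hnonneg y)]
  exact hkey
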